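/- arXiv:1606.06648 — 2 statements merged into one kernel-verified Lean document; each statement's English description precedes it below -/
import Mathlib

section
/- If (r,s) is a best rank-one approximation of a real p×q matrix R, then the injective norm of the residual is bounded by the norm of the extracted rank-one term: for all nonzero u ∈ ℝ^p and v ∈ ℝ^q, ⟨R − r⊗s, u⊗v⟩_F / (‖u‖‖v‖) ≤ ‖r⊗s‖_F. -/
open Matrix Filter Topology

noncomputable section

/-- The Frobenius inner product `⟨A,B⟩_F = trace(Aᵀ B)` on real `p × q` matrices. -/
def frobInner {p q : ℕ} (A B : Matrix (Fin p) (Fin q) ℝ) : ℝ := (Aᵀ * B).trace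

/-- The Frobenius norm. -/
def frobNorm {p q : ℕ} (A : Matrix (Fin p) (Fin q) ℝ) : ℝ := Real.sqrt (frobInner A A)

/-- The rank-one matrix `r ⊗ s` with entries `(r ⊗ s)_{ij} = r i * s j`. -/
def tensor {p q : ℕ} (r : EuclideanSpace ℝ (Fin p)) (s : EuclideanSpace ℝ (Fin q)) :
    Matrix (Fin p) (Fin q) ℝ := Matrix.of fun i j => r i * s j
lemma frobInner_eq {p q : ℕ} (A B : Matrix (Fin p) (Fin q) ℝ) :
    frobInner A B = ∑ i, ∑ j, A i j * B i j := by
  simp [frobInner, Matrix.trace, Matrix.mul_apply, Matrix.diag]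
  rw [Finset.sum_comm]

lemma quad_zero {a b : ℝ} (ha : 0 ≤ a) (h : ∀ t : ℝ, 0 ≤ a * t^2 + b * t) : b = 0 := by
  have h1 := h (-b/(a+1))
  have hpos : (0:ℝ) < a + 1 := by linarith
  have key : a * (-b/(a+1))^2 + b * (-b/(a+1)) = -b^2/(a+1)^2 := by
    field_simp; ring
  rw [key] at h1
  have h2 := mul_nonneg h1 (le_of_lt (pow_pos hpos 2))
  rw [div_mul_cancel₀] at h2
  · nlinarith [sq_nonneg b]
  · positivity

lemma tensor_add_smul_left {p q : ℕ} (r w : EuclideanSpace ℝ (Fin p))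
    (s : EuclideanSpace ℝ (Fin q)) (t : ℝ) :
    tensor (r + t • w) s = tensor r s + t • tensor w s := by
  ext i j; simp [tensor]; ring

lemma tensor_add_smul_right {p q : ℕ} (r : EuclideanSpace ℝ (Fin p))
    (s w : EuclideanSpace ℝ (Fin q)) (t : ℝ) :
    tensor r (s + t • w) = tensor r s + t • tensor r w := by
  ext i j; simp [tensor]; ring

lemma quad_expand {p q : ℕ} (X M : Matrix (Fin p) (Fin q) ℝ) (t : ℝ) :
    frobInner (X - t • M) (X - t • M)
      = frobInner X X - 2 * t * frobInner X M + t^2 * frobInner M M := by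
  have hpt : ∀ i j, (X i j - t * M i j) * (X i j - t * M i j)
      = X i j * X i j - 2 * t * (X i j * M i j) + t^2 * (M i j * M i j) := by
    intro i j; ring
  simp only [frobInner_eq, Matrix.sub_apply, Matrix.smul_apply, smul_eq_mul, hpt,
    Finset.sum_add_distrib, Finset.sum_sub_distrib, Finset.mul_sum]

lemma frobInner_self_nonneg {p q : ℕ} (A : Matrix (Fin p) (Fin q) ℝ) :
    0 ≤ frobInner A A := by
  rw [frobInner_eq]
  exact Finset.sum_nonneg fun i _ => Finset.sum_nonneg fun j _ => mul_self_nonneg _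

lemma frobInner_sub_left {p q : ℕ} (X Y Z : Matrix (Fin p) (Fin q) ℝ) :
    frobInner (X - Y) Z = frobInner X Z - frobInner Y Z := by
  simp only [frobInner_eq, Matrix.sub_apply, sub_mul, Finset.sum_sub_distrib]

lemma frobInner_add_right {p q : ℕ} (X Y Z : Matrix (Fin p) (Fin q) ℝ) :
    frobInner X (Y + Z) = frobInner X Y + frobInner X Z := by
  simp only [frobInner_eq, Matrix.add_apply, mul_add, Finset.sum_add_distrib]

lemma frobInner_smul_right {p q : ℕ} (X Y : Matrix (Fin p) (Fin q) ℝ) (t : ℝ) :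
    frobInner X (t • Y) = t * frobInner X Y := by
  simp only [frobInner_eq, Matrix.smul_apply, smul_eq_mul, Finset.mul_sum]
  congr 1; ext i; congr 1; ext j; ring

lemma frobInner_tensor {p q : ℕ} (a u : EuclideanSpace ℝ (Fin p))
    (b v : EuclideanSpace ℝ (Fin q)) :
    frobInner (tensor a b) (tensor u v) = (∑ i, a i * u i) * (∑ j, b j * v j) := by
  rw [frobInner_eq, Finset.sum_mul_sum]
  simp [tensor]
  congr 1; ext i; congr 1; ext j; ring



set_option maxHeartbeats 1000000 in
/-- If `(r,s)` is a best rank-one approximation of `R`, the injective norm of the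
residual is bounded by `‖r⊗s‖_F`. -/
theorem stmt_4 {p q : ℕ} (hp : 1 ≤ p) (hq : 1 ≤ q) (R : Matrix (Fin p) (Fin q) ℝ)
    (r : EuclideanSpace ℝ (Fin p)) (s : EuclideanSpace ℝ (Fin q))
    (hbest : ∀ (u : EuclideanSpace ℝ (Fin p)) (v : EuclideanSpace ℝ (Fin q)),
      frobNorm (R - tensor r s) ≤ frobNorm (R - tensor u v)) :
    ∀ (u : EuclideanSpace ℝ (Fin p)) (v : EuclideanSpace ℝ (Fin q)), u ≠ 0 → v ≠ 0 →
      frobInner (R - tensor r s) (tensor u v) / (‖u‖ * ‖v‖) ≤ frobNorm (tensor r s) := by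
  intro u v hu hv
  set E := R - tensor r s with hE
  have hbestQ : ∀ (a : EuclideanSpace ℝ (Fin p)) (b : EuclideanSpace ℝ (Fin q)),
      frobInner E E ≤ frobInner (R - tensor a b) (R - tensor a b) := by
    intro a b
    have h0 : (0:ℝ) ≤ frobNorm E := Real.sqrt_nonneg _
    have h2 : frobNorm E ^ 2 ≤ frobNorm (R - tensor a b) ^ 2 :=
      pow_le_pow_left₀ h0 (hbest a b) 2
    rwa [frobNorm, frobNorm, Real.sq_sqrt (frobInner_self_nonneg _),
      Real.sq_sqrt (frobInner_self_nonneg _)] at h2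
  have horth1 : ∀ w : EuclideanSpace ℝ (Fin p), frobInner E (tensor w s) = 0 := by
    intro w
    have h0 : ∀ t : ℝ, 0 ≤ frobInner (tensor w s) (tensor w s) * t^2
        + (-(2 * frobInner E (tensor w s))) * t := by
      intro t
      have h1 := hbestQ (r + t • w) s
      rw [tensor_add_smul_left] at h1
      have h2 : R - (tensor r s + t • tensor w s) = E - t • tensor w s := by
        rw [hE]; abel
      rw [h2, quad_expand] at h1
      nlinarith [h1]
    have hb := quad_zero (frobInner_self_nonneg (tensor w s)) h0
    linarith
  have horth2 : ∀ w : EuclideanSpace ℝ (Fin q), frobInner E (tensor r w) = 0 := by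
    intro w
    have h0 : ∀ t : ℝ, 0 ≤ frobInner (tensor r w) (tensor r w) * t^2
        + (-(2 * frobInner E (tensor r w))) * t := by
      intro t
      have h1 := hbestQ r (s + t • w)
      rw [tensor_add_smul_right] at h1
      have h2 : R - (tensor r s + t • tensor r w) = E - t • tensor r w := by
        rw [hE]; abel
      rw [h2, quad_expand] at h1
      nlinarith [h1]
    have hb := quad_zero (frobInner_self_nonneg (tensor r w)) h0
    linarith
  have hRS : frobInner R (tensor r s) = frobInner (tensor r s) (tensor r s) := by
    have h := horth1 r
    rw [hE, frobInner_sub_left] at h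
    linarith
  have hQE : frobInner E E = frobInner R R - frobInner (tensor r s) (tensor r s) := by
    have h0 : E = R - (1:ℝ) • tensor r s := by rw [hE, one_smul]
    rw [h0, quad_expand, hRS]; ring
  have hkey : ∀ (a : EuclideanSpace ℝ (Fin p)) (b : EuclideanSpace ℝ (Fin q)),
      (frobInner R (tensor a b))^2
        ≤ frobInner (tensor r s) (tensor r s) * frobInner (tensor a b) (tensor a b) := by
    intro a b
    set c := frobInner R (tensor a b) with hc
    set m := frobInner (tensor a b) (tensor a b) with hm
    set QS := frobInner (tensor r s) (tensor r s) with hQS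
    have hmn : 0 ≤ m := frobInner_self_nonneg _
    have hQSn : 0 ≤ QS := frobInner_self_nonneg _
    have hptw : ∀ t : ℝ, 2 * t * c ≤ t^2 * m + QS := by
      intro t
      have h1 := hbestQ (t • a) b
      have h2 : tensor (t • a) b = t • tensor a b := by
        ext i j; simp [tensor, mul_assoc]
      rw [h2, quad_expand, hQE] at h1
      linarith
    rcases eq_or_lt_of_le hmn with hm0 | hmpos
    · by_cases hc0 : c = 0
      · rw [hc0]; nlinarith
      · exfalso
        have ht := hptw ((QS + 1)/c)
        rw [← hm0] at ht
        have hc2 : 2 * ((QS+1)/c) * c = 2*(QS+1) := by field_simp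
        rw [hc2] at ht
        have : ((QS + 1)/c)^2 * 0 = 0 := by ring
        rw [this] at ht
        linarith
    · have ht := hptw (c/m)
      have h2 : 2 * (c/m) * c = 2*(c^2/m) := by field_simp
      have h3 : (c/m)^2 * m = c^2/m := by field_simp
      rw [h2, h3] at ht
      have h4 : c^2/m ≤ QS := by linarith
      calc c^2 = c^2/m * m := by field_simp
        _ ≤ QS * m := mul_le_mul_of_nonneg_right h4 hmn
  -- orthogonal components
  set cu := (∑ i, u i * r i) / (∑ i, r i * r i) with hcu
  set cv := (∑ j, v j * s j) / (∑ j, s j * s j) with hcv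
  set a : EuclideanSpace ℝ (Fin p) := u - cu • r with ha
  set b : EuclideanSpace ℝ (Fin q) := v - cv • s with hb
  have haapp : ∀ i, a i = u i - cu * r i := by intro i; rw [ha]; simp
  have hbapp : ∀ j, b j = v j - cv * s j := by intro j; rw [hb]; simp
  have hrr : 0 ≤ ∑ i, r i * r i :=
    Finset.sum_nonneg fun i _ => mul_self_nonneg _
  have hss : 0 ≤ ∑ j, s j * s j :=
    Finset.sum_nonneg fun j _ => mul_self_nonneg _
  have hra : (∑ i, r i * a i) = 0 := by
    rcases eq_or_lt_of_le hrr with h0 | hpos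
    · apply Finset.sum_eq_zero
      intro i _
      have hz := (Finset.sum_eq_zero_iff_of_nonneg
        (fun i _ => mul_self_nonneg (r i))).mp h0.symm i (Finset.mem_univ i)
      rw [mul_self_eq_zero.mp hz]; ring
    · have hur : (∑ i, u i * r i) = ∑ i, r i * u i := by
        apply Finset.sum_congr rfl; intro i _; ring
      have hX : (∑ i, r i * a i) = (∑ i, r i * u i) - cu * (∑ i, r i * r i) := by
        simp only [haapp, mul_sub, Finset.sum_sub_distrib, Finset.mul_sum]
        congr 1
        apply Finset.sum_congr rfl; intro i _; ring
      rw [hX, hcu, hur]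
      rw [div_mul_cancel₀ _ hpos.ne', sub_self]
  have hsb : (∑ j, s j * b j) = 0 := by
    rcases eq_or_lt_of_le hss with h0 | hpos
    · apply Finset.sum_eq_zero
      intro j _
      have hz := (Finset.sum_eq_zero_iff_of_nonneg
        (fun j _ => mul_self_nonneg (s j))).mp h0.symm j (Finset.mem_univ j)
      rw [mul_self_eq_zero.mp hz]; ring
    · have hvs : (∑ j, v j * s j) = ∑ j, s j * v j := by
        apply Finset.sum_congr rfl; intro j _; ring
      have hX : (∑ j, s j * b j) = (∑ j, s j * v j) - cv * (∑ j, s j * s j) := by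
        simp only [hbapp, mul_sub, Finset.sum_sub_distrib, Finset.mul_sum]
        congr 1
        apply Finset.sum_congr rfl; intro j _; ring
      rw [hX, hcv, hvs]
      rw [div_mul_cancel₀ _ hpos.ne', sub_self]
  have hdecomp : tensor u v
      = tensor a b + cv • tensor a s + cu • tensor r b + (cu * cv) • tensor r s := by
    ext i j
    simp [tensor, haapp, hbapp]
    ring
  have hEuv : frobInner E (tensor u v) = frobInner E (tensor a b) := by
    rw [hdecomp, frobInner_add_right, frobInner_add_right, frobInner_add_right,
      frobInner_smul_right, frobInner_smul_right, frobInner_smul_right,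
      horth1 a, horth2 b, horth1 r]
    ring
  have hSab : frobInner (tensor r s) (tensor a b) = 0 := by
    rw [frobInner_tensor, hra, hsb]; ring
  have hEab : frobInner E (tensor a b) = frobInner R (tensor a b) := by
    rw [hE, frobInner_sub_left, hSab]; ring
  have hQab : frobInner (tensor a b) (tensor a b)
      = (∑ i, a i * a i) * (∑ j, b j * b j) := frobInner_tensor a a b b
  have haa : (∑ i, a i * a i) ≤ ∑ i, u i * u i := by
    have hexp : (∑ i, u i * u i)
        = (∑ i, a i * a i) + 2 * cu * (∑ i, r i * a i) + cu^2 * (∑ i, r i * r i) := by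
      simp only [Finset.mul_sum, Finset.sum_add_distrib, ← Finset.sum_add_distrib]
      apply Finset.sum_congr rfl
      intro i _
      rw [haapp]
      ring
    rw [hra] at hexp
    have h2 : 0 ≤ cu^2 * (∑ i, r i * r i) := mul_nonneg (sq_nonneg cu) hrr
    linarith
  have hbb : (∑ j, b j * b j) ≤ ∑ j, v j * v j := by
    have hexp : (∑ j, v j * v j)
        = (∑ j, b j * b j) + 2 * cv * (∑ j, s j * b j) + cv^2 * (∑ j, s j * s j) := by
      simp only [Finset.mul_sum, Finset.sum_add_distrib, ← Finset.sum_add_distrib]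
      apply Finset.sum_congr rfl
      intro j _
      rw [hbapp]
      ring
    rw [hsb] at hexp
    have h2 : 0 ≤ cv^2 * (∑ j, s j * s j) := mul_nonneg (sq_nonneg cv) hss
    linarith
  have haan : 0 ≤ ∑ i, a i * a i := Finset.sum_nonneg fun i _ => mul_self_nonneg _
  have hbbn : 0 ≤ ∑ j, b j * b j := Finset.sum_nonneg fun j _ => mul_self_nonneg _
  have hnormu : ‖u‖^2 = ∑ i, u i * u i := by
    rw [EuclideanSpace.norm_eq, Real.sq_sqrt (Finset.sum_nonneg fun i _ => sq_nonneg _)]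
    apply Finset.sum_congr rfl; intro i _
    rw [Real.norm_eq_abs, sq_abs]; ring
  have hnormv : ‖v‖^2 = ∑ j, v j * v j := by
    rw [EuclideanSpace.norm_eq, Real.sq_sqrt (Finset.sum_nonneg fun j _ => sq_nonneg _)]
    apply Finset.sum_congr rfl; intro j _
    rw [Real.norm_eq_abs, sq_abs]; ring
  set σ := frobInner E (tensor u v) with hσ
  set K := frobNorm (tensor r s) * (‖u‖ * ‖v‖) with hK
  have hKn : 0 ≤ K := by
    apply mul_nonneg (Real.sqrt_nonneg _)
    positivity
  have hK2 : K^2 = frobInner (tensor r s) (tensor r s)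
      * ((∑ i, u i * u i) * (∑ j, v j * v j)) := by
    rw [hK, mul_pow, mul_pow, frobNorm, Real.sq_sqrt (frobInner_self_nonneg _),
      hnormu, hnormv]
  have hσ2 : σ^2 ≤ K^2 := by
    rw [hK2]
    have h1 : σ = frobInner R (tensor a b) := hEuv.trans hEab
    rw [h1]
    calc (frobInner R (tensor a b))^2
        ≤ frobInner (tensor r s) (tensor r s) * frobInner (tensor a b) (tensor a b) :=
          hkey a b
      _ ≤ frobInner (tensor r s) (tensor r s)
          * ((∑ i, u i * u i) * (∑ j, v j * v j)) := by
          apply mul_le_mul_of_nonneg_left _ (frobInner_self_nonneg _)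
          rw [hQab]
          calc (∑ i, a i * a i) * (∑ j, b j * b j)
              ≤ (∑ i, u i * u i) * (∑ j, b j * b j) :=
                mul_le_mul_of_nonneg_right haa hbbn
            _ ≤ (∑ i, u i * u i) * (∑ j, v j * v j) := by
                apply mul_le_mul_of_nonneg_left hbb
                linarith
  have hσK : σ ≤ K := by nlinarith [sq_nonneg (σ - K), sq_nonneg (σ + K)]
  have huv : 0 < ‖u‖ * ‖v‖ := by
    apply mul_pos <;> rwa [norm_pos_iff]
  rw [div_le_iff₀ huv]
  rw [hK] at hσK
  linarith

end
end

section
/- Convergence of the PGD algorithm for coercive symmetric problems (Proposition 1, discretized setting): let a : H × H → ℝ be a symmetric bilinear form that is coercive (there is α > 0 with a(g,g) ≥ α ‖g‖_F² for all g ∈ H), and let ℓ : H → ℝ be a linear form. Let f ∈ H be the unique element with a(f,g) = ℓ(g) for all g ∈ H. Define a PGD sequence by f₀ = g₀ ∈ H and f_{n+1} = f_n + r_{n+1}⊗s_{n+1}, where (r_{n+1}, s_{n+1}) minimizes (u,v) ↦ ½ a(f_n + u⊗v, f_n + u⊗v) − ℓ(f_n + u⊗v) over all u ∈ ℝ^p,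 v ∈ ℝ^q. Then each iteration is well-defined (a minimizer exists), and f_n converges to f in the Frobenius norm. -/
open Matrix Filter Topology

noncomputable section

lemma frobInner_self {p q : ℕ} (A : Matrix (Fin p) (Fin q) ℝ) :
    frobInner A A = ∑ i, ∑ j, A i j ^ 2 := by rw [frobInner_eq]; simp [sq]

def toE {p q : ℕ} (A : Matrix (Fin p) (Fin q) ℝ) : EuclideanSpace ℝ (Fin p × Fin q) :=
  (WithLp.equiv 2 _).symm (fun ij => A ij.1 ij.2)

lemma toE_add {p q : ℕ} (A B : Matrix (Fin p) (Fin q) ℝ) : toE (A + B) = toE A + toE B := rfl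

lemma frobNorm_eq {p q : ℕ} (A : Matrix (Fin p) (Fin q) ℝ) : frobNorm A = ‖toE A‖ := by
  rw [EuclideanSpace.norm_eq, frobNorm]
  congr 1
  rw [Fintype.sum_prod_type, frobInner_self]
  simp [toE, Real.norm_eq_abs, sq_abs]

lemma frobNorm_nonneg {p q : ℕ} (A : Matrix (Fin p) (Fin q) ℝ) : 0 ≤ frobNorm A :=
  Real.sqrt_nonneg _

lemma frobNorm_rev {p q : ℕ} (W T : Matrix (Fin p) (Fin q) ℝ) :
    frobNorm T - frobNorm W ≤ frobNorm (W + T) := by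
  rw [frobNorm_eq, frobNorm_eq, frobNorm_eq, toE_add]
  have := norm_sub_le (toE W + toE T) (toE W)
  simp at this
  linarith

lemma entry_le_frobNorm {p q : ℕ} (A : Matrix (Fin p) (Fin q) ℝ) (i : Fin p) (j : Fin q) :
    |A i j| ≤ frobNorm A := by
  rw [← Real.sqrt_sq_eq_abs, frobNorm]
  apply Real.sqrt_le_sqrt
  rw [frobInner_self]
  have h1 : ∀ k ∈ Finset.univ, (0:ℝ) ≤ ∑ l, A k l ^ 2 := by intros; positivity
  calc A i j ^2 ≤ ∑ l, A i l ^ 2 :=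
        Finset.single_le_sum (f := fun l => A i l ^ 2) (by intros; positivity) (Finset.mem_univ j)
    _ ≤ ∑ k, ∑ l, A k l ^ 2 :=
        Finset.single_le_sum (f := fun k => ∑ l, A k l ^ 2) h1 (Finset.mem_univ i)

lemma frobNorm_tensor {p q : ℕ} (u : EuclideanSpace ℝ (Fin p)) (v : EuclideanSpace ℝ (Fin q)) :
    frobNorm (tensor u v) = ‖u‖ * ‖v‖ := by
  rw [frobNorm, frobInner_self, EuclideanSpace.norm_eq, EuclideanSpace.norm_eq,
    ← Real.sqrt_mul (by positivity)]
  congr 1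
  rw [Finset.sum_mul_sum]
  apply Finset.sum_congr rfl; intro i _
  apply Finset.sum_congr rfl; intro j _
  simp [tensor, Real.norm_eq_abs, sq_abs, mul_pow]

lemma tensor_zero {p q : ℕ} (v : EuclideanSpace ℝ (Fin q)) :
    tensor (0 : EuclideanSpace ℝ (Fin p)) v = 0 := by
  ext i j; simp [tensor]

lemma tensor_zero_right {p q : ℕ} (u : EuclideanSpace ℝ (Fin p)) :
    tensor u (0 : EuclideanSpace ℝ (Fin q)) = 0 := by
  ext i j; simp [tensor]

lemma tensor_smul_left {p q : ℕ} (c : ℝ) (u : EuclideanSpace ℝ (Fin p))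
    (v : EuclideanSpace ℝ (Fin q)) : tensor (c • u) v = c • tensor u v := by
  ext i j; simp [tensor]; ring

lemma matrix_basis {p q : ℕ} (A : Matrix (Fin p) (Fin q) ℝ) :
    A = ∑ i, ∑ j, A i j • tensor (EuclideanSpace.single i 1) (EuclideanSpace.single j 1) := by
  ext i' j'
  simp [tensor, EuclideanSpace.single_apply, Finset.sum_ite_eq, Matrix.sum_apply]

lemma expand_right {p q : ℕ} (a : Matrix (Fin p) (Fin q) ℝ →ₗ[ℝ] Matrix (Fin p) (Fin q) ℝ →ₗ[ℝ] ℝ)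
    (x A : Matrix (Fin p) (Fin q) ℝ) :
    a x A = ∑ k, ∑ l, A k l *
      a x (tensor (EuclideanSpace.single k 1) (EuclideanSpace.single l 1)) := by
  conv_lhs => rw [matrix_basis A]
  simp [map_sum, _root_.map_smul, smul_eq_mul]

lemma expand_both {p q : ℕ} (a : Matrix (Fin p) (Fin q) ℝ →ₗ[ℝ] Matrix (Fin p) (Fin q) ℝ →ₗ[ℝ] ℝ)
    (x y : Matrix (Fin p) (Fin q) ℝ) :
    a x y = ∑ i, ∑ j, ∑ k, ∑ l, x i j * y k l *
      a (tensor (EuclideanSpace.single i 1) (EuclideanSpace.single j 1))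
        (tensor (EuclideanSpace.single k 1) (EuclideanSpace.single l 1)) := by
  conv_lhs => rw [matrix_basis x]
  simp only [map_sum, LinearMap.coe_sum, Finset.sum_apply]
  apply Finset.sum_congr rfl; intro i _
  apply Finset.sum_congr rfl; intro j _
  rw [_root_.map_smul, LinearMap.smul_apply, smul_eq_mul, expand_right a _ y, Finset.mul_sum]
  apply Finset.sum_congr rfl; intro k _
  rw [Finset.mul_sum]
  apply Finset.sum_congr rfl; intro l _
  ring

lemma cont_bilin {p q : ℕ} (a : Matrix (Fin p) (Fin q) ℝ →ₗ[ℝ] Matrix (Fin p) (Fin q) ℝ →ₗ[ℝ] ℝ) :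
    Continuous fun z : Matrix (Fin p) (Fin q) ℝ × Matrix (Fin p) (Fin q) ℝ => a z.1 z.2 := by
  have : (fun z : Matrix (Fin p) (Fin q) ℝ × Matrix (Fin p) (Fin q) ℝ => a z.1 z.2)
      = fun z => ∑ i, ∑ j, ∑ k, ∑ l, z.1 i j * z.2 k l *
      a (tensor (EuclideanSpace.single i 1) (EuclideanSpace.single j 1))
        (tensor (EuclideanSpace.single k 1) (EuclideanSpace.single l 1)) := by
    funext z; exact expand_both a z.1 z.2
  rw [this]
  apply continuous_finset_sum; intro i _
  apply continuous_finset_sum; intro j _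
  apply continuous_finset_sum; intro k _
  apply continuous_finset_sum; intro l _
  exact ((continuous_fst.matrix_elem i j).mul (continuous_snd.matrix_elem k l)).mul
    continuous_const

lemma cont_tensor {p q : ℕ} :
    Continuous fun z : EuclideanSpace ℝ (Fin p) × EuclideanSpace ℝ (Fin q) =>
      tensor z.1 z.2 := by
  apply continuous_matrix; intro i j
  exact ((EuclideanSpace.proj i).continuous.comp continuous_fst).mul
    ((EuclideanSpace.proj j).continuous.comp continuous_snd)

set_option maxHeartbeats 1000000 in
/-- Convergence of the PGD algorithm for coercive symmetric problems (discretized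
setting): each PGD iteration is well-defined (a minimizer over pure tensor products
exists) and the PGD iterates converge to the solution `f` of `a(f,·) = ℓ(·)` in the
Frobenius norm. -/
theorem stmt_14 {p q : ℕ} (hp : 1 ≤ p) (hq : 1 ≤ q)
    (a : Matrix (Fin p) (Fin q) ℝ →ₗ[ℝ] Matrix (Fin p) (Fin q) ℝ →ₗ[ℝ] ℝ)
    (hsymm : ∀ g h : Matrix (Fin p) (Fin q) ℝ, a g h = a h g)
    (α : ℝ) (hα : 0 < α)
    (hcoer : ∀ g : Matrix (Fin p) (Fin q) ℝ, α * frobNorm g ^ 2 ≤ a g g)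
    (ℓ : Matrix (Fin p) (Fin q) ℝ →ₗ[ℝ] ℝ)
    (f : Matrix (Fin p) (Fin q) ℝ)
    (hf : ∀ g : Matrix (Fin p) (Fin q) ℝ, a f g = ℓ g)
    (g₀ : Matrix (Fin p) (Fin q) ℝ)
    (fseq : ℕ → Matrix (Fin p) (Fin q) ℝ)
    (r : ℕ → EuclideanSpace ℝ (Fin p)) (s : ℕ → EuclideanSpace ℝ (Fin q))
    (hf0 : fseq 0 = g₀)
    (hstep : ∀ n, fseq (n + 1) = fseq n + tensor (r n) (s n))
    (hmin : ∀ (n : ℕ) (u : EuclideanSpace ℝ (Fin p)) (v : EuclideanSpace ℝ (Fin q)),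
      (1 / 2) * a (fseq n + tensor (r n) (s n)) (fseq n + tensor (r n) (s n))
          - ℓ (fseq n + tensor (r n) (s n))
        ≤ (1 / 2) * a (fseq n + tensor u v) (fseq n + tensor u v)
          - ℓ (fseq n + tensor u v)) :
    (∀ w : Matrix (Fin p) (Fin q) ℝ,
      ∃ (rm : EuclideanSpace ℝ (Fin p)) (sm : EuclideanSpace ℝ (Fin q)),
        ∀ (u : EuclideanSpace ℝ (Fin p)) (v : EuclideanSpace ℝ (Fin q)),
          (1 / 2) * a (w + tensor rm sm) (w + tensor rm sm) - ℓ (w + tensor rm sm)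
            ≤ (1 / 2) * a (w + tensor u v) (w + tensor u v) - ℓ (w + tensor u v)) ∧
    Tendsto (fun n => frobNorm (fseq n - f)) atTop (𝓝 0) := by
  classical
  have hQrel : ∀ x : Matrix (Fin p) (Fin q) ℝ,
      a (x - f) (x - f) = 2 * (1/2 * a x x - ℓ x) + a f f := by
    intro x
    simp only [map_sub, LinearMap.sub_apply]
    rw [hsymm x f, hf x]; ring
  have hexp : ∀ x y : Matrix (Fin p) (Fin q) ℝ,
      a (x + y) (x + y) = a x x + 2 * a x y + a y y := by
    intro x y
    simp only [map_add, LinearMap.add_apply]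
    rw [hsymm y x]; ring
  constructor
  · -- existence of a minimizer
    intro w
    set W : Matrix (Fin p) (Fin q) ℝ := w - f with hWdef
    have hψcont : Continuous fun z : EuclideanSpace ℝ (Fin p) × EuclideanSpace ℝ (Fin q) =>
        a (W + tensor z.1 z.2) (W + tensor z.1 z.2) :=
      (cont_bilin a).comp ((continuous_const.add cont_tensor).prodMk
        (continuous_const.add cont_tensor))
    have hD0 : 0 ≤ a W W := le_trans (by positivity) (hcoer W)
    set C : ℝ := frobNorm W with hCdef
    set R : ℝ := Real.sqrt (C + Real.sqrt (a W W / α)) with hRdef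
    have hR0 : 0 ≤ R := Real.sqrt_nonneg _
    have hR2 : R ^ 2 = C + Real.sqrt (a W W / α) :=
      Real.sq_sqrt (add_nonneg (frobNorm_nonneg W) (Real.sqrt_nonneg _))
    have hKc : IsCompact ((Metric.closedBall (0 : EuclideanSpace ℝ (Fin p)) R) ×ˢ
        (Metric.closedBall (0 : EuclideanSpace ℝ (Fin q)) R)) :=
      (isCompact_closedBall _ _).prod (isCompact_closedBall _ _)
    have hK0 : ((0, 0) : EuclideanSpace ℝ (Fin p) × EuclideanSpace ℝ (Fin q)) ∈
        (Metric.closedBall (0 : EuclideanSpace ℝ (Fin p)) R) ×ˢ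
        (Metric.closedBall (0 : EuclideanSpace ℝ (Fin q)) R) := by
      constructor <;> simpa [Metric.mem_closedBall] using hR0
    obtain ⟨⟨rm, sm⟩, hmK, hmin'⟩ := hKc.exists_isMinOn ⟨(0, 0), hK0⟩ hψcont.continuousOn
    have hmin0 : a (W + tensor rm sm) (W + tensor rm sm) ≤ a W W := by
      have := isMinOn_iff.mp hmin' (0, 0) hK0
      simpa [tensor_zero] using this
    have hglob : ∀ u v, a (W + tensor rm sm) (W + tensor rm sm)
        ≤ a (W + tensor u v) (W + tensor u v) := by
      intro u v
      by_cases hu : u = 0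
      · subst hu; rw [tensor_zero]
        simpa using hmin0
      by_cases hv : v = 0
      · subst hv; rw [tensor_zero_right]
        simpa using hmin0
      have hun : 0 < ‖u‖ := norm_pos_iff.mpr hu
      have hvn : 0 < ‖v‖ := norm_pos_iff.mpr hv
      by_cases hcase : ‖u‖ * ‖v‖ ≤ R ^ 2
      · -- rebalance the tensor so that it lies in the compact set
        set c : ℝ := Real.sqrt (‖v‖ / ‖u‖) with hcdef
        have hc : 0 < c := Real.sqrt_pos.mpr (div_pos hvn hun)
        have hc2 : c ^ 2 = ‖v‖ / ‖u‖ := Real.sq_sqrt (le_of_lt (div_pos hvn hun))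
        have htens : tensor (c • u) (c⁻¹ • v) = tensor u v := by
          ext i j
          simp only [tensor, Matrix.of_apply, PiLp.smul_apply, smul_eq_mul]
          field_simp
        have hcu : ‖c • u‖ = c * ‖u‖ := by
          rw [norm_smul, Real.norm_eq_abs, abs_of_pos hc]
        have hcv : ‖c⁻¹ • v‖ = c⁻¹ * ‖v‖ := by
          rw [norm_smul, Real.norm_eq_abs, abs_of_pos (inv_pos.mpr hc)]
        have hsqcu : (c * ‖u‖) ^ 2 = ‖u‖ * ‖v‖ := by
          rw [mul_pow, hc2]
          field_simp
        have hsqcv : (c⁻¹ * ‖v‖) ^ 2 = ‖u‖ * ‖v‖ := by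
          rw [mul_pow, inv_pow, hc2, inv_div]
          field_simp
        have hle : Real.sqrt (‖u‖ * ‖v‖) ≤ R := by
          rw [show R = Real.sqrt (R ^ 2) from (Real.sqrt_sq hR0).symm]
          exact Real.sqrt_le_sqrt hcase
        have hnu : ‖c • u‖ ≤ R := by
          rw [hcu, ← Real.sqrt_sq (by positivity : 0 ≤ c * ‖u‖), hsqcu]
          exact hle
        have hnv : ‖c⁻¹ • v‖ ≤ R := by
          rw [hcv, ← Real.sqrt_sq (by positivity : 0 ≤ c⁻¹ * ‖v‖), hsqcv]
          exact hle
        have hmem : ((c • u, c⁻¹ • v) :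
            EuclideanSpace ℝ (Fin p) × EuclideanSpace ℝ (Fin q)) ∈
            (Metric.closedBall (0 : EuclideanSpace ℝ (Fin p)) R) ×ˢ
            (Metric.closedBall (0 : EuclideanSpace ℝ (Fin q)) R) :=
          ⟨mem_closedBall_zero_iff.mpr hnu, mem_closedBall_zero_iff.mpr hnv⟩
        have := isMinOn_iff.mp hmin' _ hmem
        simpa [htens] using this
      · -- far-away tensors have larger energy than the origin
        push_neg at hcase
        have hT : frobNorm (tensor u v) = ‖u‖ * ‖v‖ := frobNorm_tensor u v
        have h1 : frobNorm (tensor u v) - C ≤ frobNorm (W + tensor u v) :=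
          frobNorm_rev W (tensor u v)
        have hsq : Real.sqrt (a W W / α) ^ 2 = a W W / α := Real.sq_sqrt (by positivity)
        have h2 : α * frobNorm (W + tensor u v) ^ 2
            ≤ a (W + tensor u v) (W + tensor u v) := hcoer _
        have hy : Real.sqrt (a W W / α) < ‖u‖ * ‖v‖ - C := by linarith
        have hyx : ‖u‖ * ‖v‖ - C ≤ frobNorm (W + tensor u v) := by rw [← hT]; exact h1
        have hs0 : 0 ≤ Real.sqrt (a W W / α) := Real.sqrt_nonneg _
        have hyy : Real.sqrt (a W W / α) ^ 2 < (‖u‖ * ‖v‖ - C) ^ 2 := by nlinarith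
        have hxx : (‖u‖ * ‖v‖ - C) ^ 2 ≤ frobNorm (W + tensor u v) ^ 2 := by nlinarith
        have hDa : α * (a W W / α) = a W W := by field_simp
        have hfinal : a W W < α * frobNorm (W + tensor u v) ^ 2 := by
          rw [← hDa]
          apply mul_lt_mul_of_pos_left _ hα
          rw [← hsq]; exact lt_of_lt_of_le hyy hxx
        linarith
    refine ⟨rm, sm, ?_⟩
    intro u v
    have e1 := hQrel (w + tensor rm sm)
    have e2 := hQrel (w + tensor u v)
    have hs1 : w + tensor rm sm - f = W + tensor rm sm := add_sub_right_comm w _ f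
    have hs2 : w + tensor u v - f = W + tensor u v := add_sub_right_comm w _ f
    rw [hs1] at e1
    rw [hs2] at e2
    have := hglob u v
    linarith
  · -- convergence of the iterates
    set G : ℕ → Matrix (Fin p) (Fin q) ℝ := fun n => fseq n - f with hGdef
    set E : ℕ → ℝ := fun n => a (G n) (G n) with hEdef
    have hEn : ∀ n, E n = a (G n) (G n) := fun n => rfl
    have hkey : ∀ (n : ℕ) (u : EuclideanSpace ℝ (Fin p)) (v : EuclideanSpace ℝ (Fin q)),
        E (n + 1) ≤ a (G n + tensor u v) (G n + tensor u v) := by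
      intro n u v
      have h := hmin n u v
      have e1 := hQrel (fseq n + tensor (r n) (s n))
      have e2 := hQrel (fseq n + tensor u v)
      have hs1 : fseq n + tensor (r n) (s n) - f = G (n + 1) := by
        simp only [hGdef, hstep n]
      have hs2 : fseq n + tensor u v - f = G n + tensor u v := add_sub_right_comm _ _ _
      rw [hs1] at e1
      rw [hs2] at e2
      rw [hEn]
      linarith
    have hanti : Antitone E := by
      apply antitone_nat_of_succ_le
      intro n
      have := hkey n 0 0
      simpa [hEn, tensor_zero] using this
    have hE0 : ∀ n, 0 ≤ E n := by
      intro n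
      rw [hEn]
      exact le_trans (by positivity) (hcoer (G n))
    have hd : Tendsto (fun n => E n - E (n + 1)) atTop (𝓝 0) := by
      have hEt := tendsto_atTop_ciInf hanti ⟨0, by rintro x ⟨n, rfl⟩; exact hE0 n⟩
      have h2 : Tendsto (fun n => E (n + 1)) atTop (𝓝 (⨅ n, E n)) :=
        hEt.comp (tendsto_add_atTop_nat 1)
      have h3 := hEt.sub h2
      rw [sub_self] at h3
      exact h3
    have hkl : ∀ (k : Fin p) (l : Fin q), Tendsto (fun n => |a (G n)
        (tensor (EuclideanSpace.single k 1) (EuclideanSpace.single l 1))|) atTop (𝓝 0) := by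
      intro k l
      set Y : Matrix (Fin p) (Fin q) ℝ :=
        tensor (EuclideanSpace.single k 1) (EuclideanSpace.single l 1) with hYdef
      have hcpos : 0 < a Y Y := by
        have h := hcoer Y
        rw [hYdef, frobNorm_tensor, EuclideanSpace.norm_single, EuclideanSpace.norm_single] at h
        simp only [norm_one, mul_one, one_pow] at h
        rw [← hYdef] at h
        linarith
      have hb2 : ∀ n, (a (G n) Y) ^ 2 ≤ a Y Y * (E n - E (n + 1)) := by
        intro n
        have hquad : ∀ t : ℝ, 0 ≤ a Y Y * (t * t) + (2 * a (G n) Y) * t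
            + (E n - E (n + 1)) := by
          intro t
          have h := hkey n (t • EuclideanSpace.single k 1) (EuclideanSpace.single l 1)
          rw [tensor_smul_left, ← hYdef] at h
          have hx := hexp (G n) (t • Y)
          simp only [_root_.map_smul, LinearMap.smul_apply, smul_eq_mul] at hx
          have he := hEn n
          nlinarith [h, hx]
        have hdisc := discrim_le_zero hquad
        rw [discrim] at hdisc
        nlinarith [hdisc]
      have habs : ∀ n, |a (G n) Y| ≤ Real.sqrt (a Y Y * (E n - E (n + 1))) := by
        intro n
        rw [← Real.sqrt_sq_eq_abs]
        exact Real.sqrt_le_sqrt (hb2 n)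
      have hlim : Tendsto (fun n => Real.sqrt (a Y Y * (E n - E (n + 1)))) atTop (𝓝 0) := by
        have h1 : Tendsto (fun n => a Y Y * (E n - E (n + 1))) atTop (𝓝 (a Y Y * 0)) :=
          hd.const_mul _
        rw [mul_zero] at h1
        simpa using h1.sqrt
      exact squeeze_zero (fun n => abs_nonneg _) habs hlim
    have hS : Tendsto (fun n => ∑ k, ∑ l, |a (G n)
        (tensor (EuclideanSpace.single k 1) (EuclideanSpace.single l 1))|) atTop (𝓝 0) := by
      have := tendsto_finset_sum (Finset.univ : Finset (Fin p))
        (fun k _ => tendsto_finset_sum (Finset.univ : Finset (Fin q)) (fun l _ => hkl k l))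
      simpa using this
    set B : ℝ := Real.sqrt (E 0 / α) with hBdef
    have hB : ∀ n, frobNorm (G n) ≤ B := by
      intro n
      have h1 : α * frobNorm (G n) ^ 2 ≤ E 0 := by
        have h0 := hanti (Nat.zero_le n)
        rw [hEn n] at h0
        linarith [hcoer (G n)]
      have h2 : frobNorm (G n) ^ 2 ≤ E 0 / α := by
        rw [le_div_iff₀ hα]; linarith [h1, mul_comm α (frobNorm (G n) ^ 2)]
      calc frobNorm (G n) = Real.sqrt (frobNorm (G n) ^ 2) :=
            (Real.sqrt_sq (frobNorm_nonneg _)).symm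
        _ ≤ B := Real.sqrt_le_sqrt h2
    have hBnn : 0 ≤ B := Real.sqrt_nonneg _
    have hub : ∀ n, α * frobNorm (G n) ^ 2 ≤ B * ∑ k, ∑ l, |a (G n)
        (tensor (EuclideanSpace.single k 1) (EuclideanSpace.single l 1))| := by
      intro n
      refine le_trans (hcoer (G n)) ?_
      rw [expand_right a (G n) (G n), Finset.mul_sum]
      apply Finset.sum_le_sum; intro k _
      rw [Finset.mul_sum]
      apply Finset.sum_le_sum; intro l _
      calc (G n) k l * a (G n) (tensor (EuclideanSpace.single k 1) (EuclideanSpace.single l 1))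
          ≤ |(G n) k l * a (G n) (tensor (EuclideanSpace.single k 1)
              (EuclideanSpace.single l 1))| := le_abs_self _
        _ = |(G n) k l| * |a (G n) (tensor (EuclideanSpace.single k 1)
              (EuclideanSpace.single l 1))| := abs_mul _ _
        _ ≤ B * |a (G n) (tensor (EuclideanSpace.single k 1)
              (EuclideanSpace.single l 1))| :=
            mul_le_mul_of_nonneg_right (le_trans (entry_le_frobNorm _ k l) (hB n)) (abs_nonneg _)
    have hsq0 : Tendsto (fun n => α * frobNorm (G n) ^ 2) atTop (𝓝 0) := by
      apply squeeze_zero (fun n => by positivity) hub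
      have := hS.const_mul B
      simpa [mul_comm] using this
    have hfrob2 : Tendsto (fun n => frobNorm (G n) ^ 2) atTop (𝓝 0) := by
      have h := hsq0.const_mul α⁻¹
      simp only [← mul_assoc, inv_mul_cancel₀ hα.ne', one_mul, mul_zero] at h
      exact h
    have hfin := hfrob2.sqrt
    rw [Real.sqrt_zero] at hfin
    have heq : (fun n => frobNorm (fseq n - f))
        = fun n => Real.sqrt (frobNorm (G n) ^ 2) := by
      funext n
      rw [Real.sqrt_sq (frobNorm_nonneg _)]
    rw [heq]
    exact hfin

end
end
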